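/- Let R be a Tate ring with ring of definition R₀ and pseudo-uniformizer ϖ. Let t₁,…,tₙ ∈ R generate the unit ideal of R. For each i let φᵢ : R → R[1/tᵢ] be the localization map. Then every r ∈ R such that for all i, φᵢ(r) lies in the subring φᵢ(R₀)[t₁/tᵢ,…,tₙ/tᵢ] of R[1/tᵢ], is power-bounded in R. -/

import Mathlib

section Aux
variable {R : Type*} [CommRing R] (R₀ : Subring R) {n : ℕ} (t : Fin n → R)

/-- The `R₀`-submodule of `R` spanned by the monomials of degree `d` in the `t i`. -/
def Mdeg (d : ℕ) : Submodule ↥R₀ R :=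
  Submodule.span ↥R₀ (Set.range fun f : Fin d → Fin n => ∏ k, t (f k))

variable {R₀ t}

lemma smul_eq_mul' (a : ↥R₀) (x : R) : a • x = (a : R) * x := rfl

lemma one_mem_M0 : (1 : R) ∈ Mdeg R₀ t 0 := by
  apply Submodule.subset_span
  exact ⟨Fin.elim0, by simp⟩

lemma t_mem_M1 (j : Fin n) : t j ∈ Mdeg R₀ t 1 := by
  apply Submodule.subset_span
  exact ⟨fun _ => j, by simp⟩

lemma mul_mem_M {d₁ d₂ : ℕ} {x y : R} (hx : x ∈ Mdeg R₀ t d₁) (hy : y ∈ Mdeg R₀ t d₂) :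
    x * y ∈ Mdeg R₀ t (d₁ + d₂) := by
  have hle : Mdeg R₀ t d₁ * Mdeg R₀ t d₂ ≤ Mdeg R₀ t (d₁ + d₂) := by
    rw [Mdeg, Mdeg, Submodule.span_mul_span]
    apply Submodule.span_le.2
    rintro _ ⟨_, ⟨f₁, rfl⟩, _, ⟨f₂, rfl⟩, rfl⟩
    apply Submodule.subset_span
    refine ⟨Fin.append f₁ f₂, ?_⟩
    show ∏ k : Fin (d₁ + d₂), t (Fin.append f₁ f₂ k) = _
    rw [Fin.prod_univ_add]
    simp
  exact hle (Submodule.mul_mem_mul hx hy)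

lemma pow_mem_M (i : Fin n) (k : ℕ) : t i ^ k ∈ Mdeg R₀ t k := by
  apply Submodule.subset_span
  exact ⟨fun _ => i, by simp⟩

end Aux

section Aux2
variable {R : Type*} [CommRing R] {R₀ : Subring R} {n : ℕ} {t : Fin n → R}

lemma finset_prod_mem_M {K : ℕ} (s : Finset (Fin K)) (f : Fin K → Fin n) :
    ∏ k ∈ s, t (f k) ∈ Mdeg R₀ t s.card := by
  classical
  induction s using Finset.induction with
  | empty => simpa using one_mem_M0
  | insert a s' hnotmem ih =>
    rw [Finset.prod_insert hnotmem, Finset.card_insert_of_notMem hnotmem]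
    have := mul_mem_M (t_mem_M1 (t := t) (R₀ := R₀) (f a)) ih
    rwa [add_comm 1 s'.card] at this

/-- Extraction from the localization hypothesis. -/
lemma loc_extract (i : Fin n) {x : R}
    (hx : algebraMap R (Localization.Away (t i)) x ∈
        Subring.closure
          ((algebraMap R (Localization.Away (t i))) '' (R₀ : Set R) ∪
            Set.range (fun j : Fin n =>
              algebraMap R (Localization.Away (t i)) (t j) *
                IsLocalization.Away.invSelf (S := Localization.Away (t i)) (t i)))) :
    ∃ D : ℕ, t i ^ D * x ∈ Mdeg R₀ t D := by
  set S := Localization.Away (t i)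
  set φ := algebraMap R S with hφ
  have key : ∀ z ∈ Subring.closure
          (φ '' (R₀ : Set R) ∪
            Set.range (fun j : Fin n =>
              φ (t j) * IsLocalization.Away.invSelf (S := S) (t i))),
      ∃ (D : ℕ) (m : R), m ∈ Mdeg R₀ t D ∧ z * φ (t i) ^ D = φ m := by
    intro z hz
    induction hz using Subring.closure_induction with
    | mem z hz =>
      rcases hz with ⟨a, ha, rfl⟩ | ⟨j, rfl⟩
      · refine ⟨0, a, ?_, by simp⟩
        have h1 := Submodule.smul_mem (Mdeg R₀ t 0) ⟨a, ha⟩ one_mem_M0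
        rwa [smul_eq_mul', mul_one] at h1
      · refine ⟨1, t j, t_mem_M1 j, ?_⟩
        have h2 : φ (t i) * IsLocalization.Away.invSelf (S := S) (t i) = 1 :=
          IsLocalization.Away.mul_invSelf (t i)
        calc φ (t j) * IsLocalization.Away.invSelf (S := S) (t i) * φ (t i) ^ 1
            = φ (t j) * (φ (t i) * IsLocalization.Away.invSelf (S := S) (t i)) := by ring
          _ = φ (t j) := by rw [h2, mul_one]
    | zero => exact ⟨0, 0, Submodule.zero_mem _, by simp⟩
    | one => exact ⟨0, 1, one_mem_M0, by simp⟩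
    | add x y hxc hyc hx hy =>
      obtain ⟨D₁, m₁, hm₁, he₁⟩ := hx
      obtain ⟨D₂, m₂, hm₂, he₂⟩ := hy
      refine ⟨D₁ + D₂, t i ^ D₂ * m₁ + t i ^ D₁ * m₂, ?_, ?_⟩
      · apply Submodule.add_mem
        · have h3 := mul_mem_M (pow_mem_M (R₀ := R₀) i D₂) hm₁
          rwa [add_comm D₂ D₁] at h3
        · exact mul_mem_M (pow_mem_M (R₀ := R₀) i D₁) hm₂
      · rw [map_add, map_mul, map_mul, map_pow, map_pow, ← he₁, ← he₂]
        ring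
    | neg x hxc hx =>
      obtain ⟨D, m, hm, he⟩ := hx
      exact ⟨D, -m, Submodule.neg_mem _ hm, by rw [map_neg, ← he]; ring⟩
    | mul x y hxc hyc hx hy =>
      obtain ⟨D₁, m₁, hm₁, he₁⟩ := hx
      obtain ⟨D₂, m₂, hm₂, he₂⟩ := hy
      refine ⟨D₁ + D₂, m₁ * m₂, mul_mem_M hm₁ hm₂, ?_⟩
      rw [map_mul, pow_add, ← he₁, ← he₂]; ring
  obtain ⟨D, m, hm, he⟩ := key _ hx
  have h0 : φ (t i ^ D * x - m) = 0 := by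
    rw [map_sub, map_mul, map_pow, ← he]; ring
  rw [IsLocalization.map_eq_zero_iff (Submonoid.powers (t i))] at h0
  obtain ⟨⟨c, hc⟩, hc0⟩ := h0
  obtain ⟨e, rfl⟩ := hc
  refine ⟨e + D, ?_⟩
  have hmem : t i ^ e * m ∈ Mdeg R₀ t (e + D) := mul_mem_M (pow_mem_M i e) hm
  have heq : t i ^ (e + D) * x = t i ^ e * m := by
    have : (t i ^ e : R) * (t i ^ D * x - m) = 0 := hc0
    rw [pow_add]; linear_combination this
  rwa [heq]

end Aux2

section Aux3
variable {R : Type*} [CommRing R] {R₀ : Subring R} {n : ℕ} {t : Fin n → R}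

lemma gen_stable {r : R} {E : ℕ} (hE1 : 1 ≤ E) (hE : ∀ i : Fin n, t i ^ E * r ∈ Mdeg R₀ t E)
    {K : ℕ} (hK : K = n * (E - 1) + 1) (f : Fin K → Fin n) :
    r * ∏ k, t (f k) ∈ Mdeg R₀ t K := by
  classical
  have hmaps : ∀ a ∈ (Finset.univ : Finset (Fin K)), f a ∈ (Finset.univ : Finset (Fin n)) :=
    fun a _ => Finset.mem_univ _
  have hcard : (Finset.univ : Finset (Fin n)).card * (E - 1) <
      (Finset.univ : Finset (Fin K)).card := by
    simp [hK]
  obtain ⟨i, -, hi⟩ := Finset.exists_lt_card_fiber_of_mul_lt_card_of_maps_to hmaps hcard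
  set s : Finset (Fin K) := Finset.univ.filter (fun k => f k = i) with hs
  have hEc : E ≤ s.card := by omega
  have hcK : s.card ≤ K := by
    simpa using Finset.card_le_card (Finset.subset_univ s)
  have hprod : ∏ k ∈ s, t (f k) = t i ^ s.card := by
    rw [Finset.prod_congr rfl (fun k hk => by
      rw [(Finset.mem_filter.mp hk).2]), Finset.prod_const]
  have hsplit : (∏ k, t (f k)) = t i ^ s.card * ∏ k ∈ sᶜ, t (f k) := by
    rw [← hprod, Finset.prod_mul_prod_compl]
  have h1 : t i ^ s.card * r ∈ Mdeg R₀ t s.card := by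
    have := mul_mem_M (pow_mem_M (R₀ := R₀) i (s.card - E)) (hE i)
    rw [← mul_assoc, ← pow_add] at this
    rwa [Nat.sub_add_cancel hEc] at this
  have h2 : ∏ k ∈ sᶜ, t (f k) ∈ Mdeg R₀ t sᶜ.card := finset_prod_mem_M sᶜ f
  have h3 := mul_mem_M h1 h2
  have hcc : s.card + sᶜ.card = K := by
    rw [Finset.card_compl]; simp; omega
  rw [hcc] at h3
  have : r * ∏ k, t (f k) = t i ^ s.card * r * ∏ k ∈ sᶜ, t (f k) := by
    rw [hsplit]; ring
  rwa [this]

lemma span_pow_le (K : ℕ) :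
    (Ideal.span (Set.range t)) ^ K ≤
      Submodule.span R (Set.range fun f : Fin K → Fin n => ∏ k, t (f k)) := by
  induction K with
  | zero =>
    rw [pow_zero, Ideal.one_eq_top]
    have h1 : (1 : R) ∈ Submodule.span R (Set.range fun f : Fin 0 → Fin n => ∏ k, t (f k)) :=
      Submodule.subset_span ⟨Fin.elim0, by simp⟩
    rw [(Ideal.eq_top_iff_one _).mpr h1]
  | succ K ih =>
    rw [pow_succ]
    calc (Ideal.span (Set.range t)) ^ K * Ideal.span (Set.range t)
        ≤ Submodule.span R (Set.range fun f : Fin K → Fin n => ∏ k, t (f k)) *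
            Submodule.span R (Set.range t) := mul_le_mul' ih le_rfl
      _ ≤ _ := by
          rw [Submodule.span_mul_span]
          apply Submodule.span_le.2
          rintro _ ⟨_, ⟨f, rfl⟩, _, ⟨j, rfl⟩, rfl⟩
          apply Submodule.subset_span
          refine ⟨Fin.snoc f j, ?_⟩
          show ∏ k : Fin (K + 1), t ((Fin.snoc f j : Fin (K + 1) → Fin n) k) = _
          rw [Fin.prod_univ_castSucc]
          simp

end Aux3



/-- Let `R` be a Tate ring with ring of definition `R₀` and pseudo-uniformizer
`ϖ`, and let `t₁, …, tₙ` generate the unit ideal of `R`. If `r ∈ R` is such that for each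
`i`, the image `φᵢ(r)` lies in the subring `φᵢ(R₀)[t₁/tᵢ, …, tₙ/tᵢ]` of `R[1/tᵢ]`, then
`r` is power-bounded in `R`. -/
theorem locally_integral_implies_powerBounded
    (R : Type*) [CommRing R] (R₀ : Subring R) (ϖ : Rˣ) (hϖ : (ϖ : R) ∈ R₀)
    (hloc : ∀ r : R, ∃ n : ℕ, (ϖ : R) ^ n * r ∈ R₀)
    (n : ℕ) (t : Fin n → R) (hspan : Ideal.span (Set.range t) = ⊤)
    (r : R)
    (hr : ∀ i : Fin n,
      algebraMap R (Localization.Away (t i)) r ∈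
        Subring.closure
          ((algebraMap R (Localization.Away (t i))) '' (R₀ : Set R) ∪
            Set.range (fun j : Fin n =>
              algebraMap R (Localization.Away (t i)) (t j) *
                IsLocalization.Away.invSelf (S := Localization.Away (t i)) (t i)))) :
    ∃ N : ℕ, ∀ m : ℕ, (ϖ : R) ^ N * r ^ m ∈ R₀ := by
  classical
  -- choose D i with t i ^ D i * r ∈ M (D i)
  choose D hD using fun i => loc_extract (R₀ := R₀) i (hr i)
  set E : ℕ := (Finset.univ.sup D) + 1 with hEdef
  have hE1 : 1 ≤ E := Nat.le_add_left 1 _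
  have hE : ∀ i : Fin n, t i ^ E * r ∈ Mdeg R₀ t E := by
    intro i
    have hDi : D i ≤ E := le_trans (Finset.le_sup (Finset.mem_univ i)) (Nat.le_succ _)
    have := mul_mem_M (pow_mem_M (R₀ := R₀) i (E - D i)) (hD i)
    rw [← mul_assoc, ← pow_add, Nat.sub_add_cancel hDi] at this
    exact this
  set K : ℕ := n * (E - 1) + 1 with hKdef
  -- stability of M K under multiplication by r
  have stab : ∀ x ∈ Mdeg R₀ t K, r * x ∈ Mdeg R₀ t K := by
    intro x hx
    induction hx using Submodule.span_induction with
    | mem g hg =>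
      obtain ⟨f, rfl⟩ := hg
      exact gen_stable hE1 hE hKdef f
    | zero => simpa using Submodule.zero_mem _
    | add x y hxc hyc hx hy =>
      rw [mul_add]; exact Submodule.add_mem _ hx hy
    | smul a x hxc hx =>
      rw [smul_eq_mul', mul_left_comm, ← smul_eq_mul']
      exact Submodule.smul_mem _ a hx
  -- ϖ ^ N₀ ∈ M K
  have hone : (1 : R) ∈ Submodule.span R (Set.range fun f : Fin K → Fin n => ∏ k, t (f k)) := by
    apply span_pow_le K
    rw [hspan, Ideal.top_pow]
    exact Submodule.mem_top
  have hN0 : ∃ N₀ : ℕ, (ϖ : R) ^ N₀ ∈ Mdeg R₀ t K := by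
    have : ∀ x ∈ Submodule.span R (Set.range fun f : Fin K → Fin n => ∏ k, t (f k)),
        ∃ N : ℕ, (ϖ : R) ^ N * x ∈ Mdeg R₀ t K := by
      intro x hx
      induction hx using Submodule.span_induction with
      | mem g hg => exact ⟨0, by simpa [Mdeg] using Submodule.subset_span hg⟩
      | zero => exact ⟨0, by simpa using Submodule.zero_mem _⟩
      | add x y hxc hyc hx hy =>
        obtain ⟨N₁, h₁⟩ := hx
        obtain ⟨N₂, h₂⟩ := hy
        refine ⟨N₁ + N₂, ?_⟩
        rw [mul_add]
        apply Submodule.add_mem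
        · have := Submodule.smul_mem (Mdeg R₀ t K) ⟨(ϖ : R) ^ N₂, Subring.pow_mem R₀ hϖ N₂⟩ h₁
          rw [smul_eq_mul'] at this
          have heq : ((⟨(ϖ : R) ^ N₂, Subring.pow_mem R₀ hϖ N₂⟩ : ↥R₀) : R) *
              ((ϖ : R) ^ N₁ * x) = (ϖ : R) ^ (N₁ + N₂) * x := by
            show (ϖ : R) ^ N₂ * ((ϖ : R) ^ N₁ * x) = _
            rw [pow_add]; ring
          rwa [heq] at this
        · have := Submodule.smul_mem (Mdeg R₀ t K) ⟨(ϖ : R) ^ N₁, Subring.pow_mem R₀ hϖ N₁⟩ h₂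
          rw [smul_eq_mul'] at this
          have heq : ((⟨(ϖ : R) ^ N₁, Subring.pow_mem R₀ hϖ N₁⟩ : ↥R₀) : R) *
              ((ϖ : R) ^ N₂ * y) = (ϖ : R) ^ (N₁ + N₂) * y := by
            show (ϖ : R) ^ N₁ * ((ϖ : R) ^ N₂ * y) = _
            rw [pow_add]; ring
          rwa [heq] at this
      | smul c x hxc hx =>
        obtain ⟨N, h⟩ := hx
        obtain ⟨Nc, hNc⟩ := hloc c
        refine ⟨N + Nc, ?_⟩
        have := Submodule.smul_mem (Mdeg R₀ t K) ⟨(ϖ : R) ^ Nc * c, hNc⟩ h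
        rw [smul_eq_mul'] at this
        have heq : ((⟨(ϖ : R) ^ Nc * c, hNc⟩ : ↥R₀) : R) * ((ϖ : R) ^ N * x)
            = (ϖ : R) ^ (N + Nc) * (c • x) := by
          show (ϖ : R) ^ Nc * c * ((ϖ : R) ^ N * x) = _
          rw [smul_eq_mul, pow_add]; ring
        rwa [heq] at this
    obtain ⟨N₀, h⟩ := this 1 hone
    exact ⟨N₀, by simpa using h⟩
  obtain ⟨N₀, hN₀⟩ := hN0
  -- ϖ ^ N₁ * M K ⊆ R₀
  choose L hL using fun j => hloc (t j)
  set Lm : ℕ := Finset.univ.sup L with hLm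
  have htL : ∀ j : Fin n, (ϖ : R) ^ Lm * t j ∈ R₀ := by
    intro j
    have hj : L j ≤ Lm := Finset.le_sup (Finset.mem_univ j)
    have : (ϖ : R) ^ Lm * t j = (ϖ : R) ^ (Lm - L j) * ((ϖ : R) ^ (L j) * t j) := by
      rw [← mul_assoc, ← pow_add, Nat.sub_add_cancel hj]
    rw [this]
    exact Subring.mul_mem _ (Subring.pow_mem R₀ hϖ _) (hL j)
  have hN1 : ∀ x ∈ Mdeg R₀ t K, (ϖ : R) ^ (K * Lm) * x ∈ R₀ := by
    intro x hx
    induction hx using Submodule.span_induction with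
    | mem g hg =>
      obtain ⟨f, rfl⟩ := hg
      have : (ϖ : R) ^ (K * Lm) * ∏ k : Fin K, t (f k)
          = ∏ k : Fin K, ((ϖ : R) ^ Lm * t (f k)) := by
        rw [Finset.prod_mul_distrib, Finset.prod_const, Finset.card_univ, Fintype.card_fin,
          ← pow_mul, Nat.mul_comm Lm K]
      rw [this]
      exact Subring.prod_mem _ (fun k _ => htL (f k))
    | zero => simpa using Subring.zero_mem R₀
    | add x y hxc hyc hx hy => rw [mul_add]; exact Subring.add_mem _ hx hy
    | smul a x hxc hx =>
      rw [smul_eq_mul', mul_left_comm]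
      exact Subring.mul_mem _ a.2 hx
  -- conclusion
  refine ⟨K * Lm + N₀, ?_⟩
  intro m
  have hmem : ∀ m : ℕ, (ϖ : R) ^ N₀ * r ^ m ∈ Mdeg R₀ t K := by
    intro m
    induction m with
    | zero => simpa using hN₀
    | succ m ih =>
      have h := stab _ ih
      have heq : r * ((ϖ : R) ^ N₀ * r ^ m) = (ϖ : R) ^ N₀ * r ^ (m + 1) := by
        rw [pow_succ]; ring
      rwa [heq] at h
  have := hN1 _ (hmem m)
  rwa [← mul_assoc, ← pow_add] at this
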